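/- For n ≥ r + 2 ≥ 4, the base polytope of the uniform matroid U_{n,r} admits a nontrivial hyperplane split: with E1 = {1,...,k}, E2 = {k+1,...,n} (2 ≤ k ≤ ⌊n/2⌋) and suitable a1, a2 as in the good-partition condition, the families B1 = {B : |B| = r, |B ∩ E1| ≤ r1 − a1} and B2 = {B : |B| = r, |B ∩ E2| ≤ r2 − a2} are base families of matroids, their union is all r-subsets of {1,...,n}, both are proper subfamilies, their intersection is nonempty and is the base family of a matroid. -/
import Mathlib


/-- The basis exchange property for a family of finite sets. -/
def FinsetExchange (P : Finset ℕ → Prop) : Prop :=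
  ∀ B1 B2, P B1 → P B2 → ∀ e ∈ B1 \ B2, ∃ f ∈ B2 \ B1, P (insert f (B1.erase e))


lemma swap_inter_card (B S : Finset ℕ) {e f : ℕ} (heB : e ∈ B) (hfB : f ∉ B) :
    ((insert f (B.erase e)) ∩ S).card + (if e ∈ S then 1 else 0)
      = (B ∩ S).card + (if f ∈ S then 1 else 0) := by
  have h1 : (B.erase e) ∩ S = (B ∩ S).erase e := Finset.erase_inter e B S
  have hfBS : f ∉ B ∩ S := by simp [Finset.mem_inter]; tauto
  by_cases hfS : f ∈ S
  · rw [Finset.insert_inter_of_mem hfS, h1]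
    rw [Finset.card_insert_of_notMem (fun h => hfBS (Finset.mem_of_mem_erase h))]
    by_cases heS : e ∈ S
    · have heBS : e ∈ B ∩ S := Finset.mem_inter.mpr ⟨heB, heS⟩
      rw [Finset.card_erase_of_mem heBS]
      have : 1 ≤ (B ∩ S).card := Finset.card_pos.mpr ⟨e, heBS⟩
      simp [hfS, heS]; omega
    · rw [Finset.erase_eq_of_notMem (by simp [Finset.mem_inter]; tauto)]
      simp [hfS, heS]
  · rw [Finset.insert_inter_of_notMem hfS, h1]
    by_cases heS : e ∈ S
    · have heBS : e ∈ B ∩ S := Finset.mem_inter.mpr ⟨heB, heS⟩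
      rw [Finset.card_erase_of_mem heBS]
      have : 1 ≤ (B ∩ S).card := Finset.card_pos.mpr ⟨e, heBS⟩
      simp [hfS, heS]; omega
    · rw [Finset.erase_eq_of_notMem (by simp [Finset.mem_inter]; tauto)]
      simp [hfS, heS]

lemma count_lemma (B B' S : Finset ℕ) {e : ℕ} (hcard : B.card = B'.card)
    (heB : e ∈ B) (heB' : e ∉ B') (heS : e ∉ S) (hall : ∀ f ∈ B' \ B, f ∈ S) :
    (B ∩ S).card + 1 ≤ (B' ∩ S).card := by
  have hu1 : B' ∩ S = ((B ∩ B') ∩ S) ∪ ((B' \ B) ∩ S) := by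
    ext x; simp only [Finset.mem_union, Finset.mem_inter, Finset.mem_sdiff]; tauto
  have hd1 : Disjoint ((B ∩ B') ∩ S) ((B' \ B) ∩ S) := by
    rw [Finset.disjoint_left]; intro a ha hb
    simp only [Finset.mem_inter, Finset.mem_sdiff] at ha hb; tauto
  have hu2 : B ∩ S = ((B ∩ B') ∩ S) ∪ ((B \ B') ∩ S) := by
    ext x; simp only [Finset.mem_union, Finset.mem_inter, Finset.mem_sdiff]; tauto
  have hd2 : Disjoint ((B ∩ B') ∩ S) ((B \ B') ∩ S) := by
    rw [Finset.disjoint_left]; intro a ha hb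
    simp only [Finset.mem_inter, Finset.mem_sdiff] at ha hb; tauto
  have hc1 : (B' ∩ S).card = ((B ∩ B') ∩ S).card + ((B' \ B) ∩ S).card := by
    rw [hu1, Finset.card_union_of_disjoint hd1]
  have hc2 : (B ∩ S).card = ((B ∩ B') ∩ S).card + ((B \ B') ∩ S).card := by
    rw [hu2, Finset.card_union_of_disjoint hd2]
  have he1 : ((B' \ B) ∩ S).card = (B' \ B).card := by
    rw [Finset.inter_eq_left.mpr hall]
  have hsub : (B \ B') ∩ S ⊆ (B \ B').erase e := by
    intro x hx
    simp only [Finset.mem_inter, Finset.mem_sdiff] at hx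
    refine Finset.mem_erase.mpr ⟨fun h => heS (h ▸ hx.2), Finset.mem_sdiff.mpr hx.1⟩
  have hE : e ∈ B \ B' := Finset.mem_sdiff.mpr ⟨heB, heB'⟩
  have h3 : ((B \ B') ∩ S).card ≤ (B \ B').card - 1 := by
    calc ((B \ B') ∩ S).card ≤ ((B \ B').erase e).card := Finset.card_le_card hsub
    _ = (B \ B').card - 1 := Finset.card_erase_of_mem hE
  have h4 : (B \ B').card = (B' \ B).card := Finset.card_sdiff_comm hcard
  have h5 : 1 ≤ (B \ B').card := Finset.card_pos.mpr ⟨e, hE⟩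
  omega

lemma exch_one (E S : Finset ℕ) (r c : ℕ) :
    ∀ B B' : Finset ℕ, (B ⊆ E ∧ B.card = r ∧ (B ∩ S).card ≤ c) →
      (B' ⊆ E ∧ B'.card = r ∧ (B' ∩ S).card ≤ c) →
      ∀ e ∈ B \ B', ∃ f ∈ B' \ B,
        (insert f (B.erase e) ⊆ E ∧ (insert f (B.erase e)).card = r ∧
          ((insert f (B.erase e)) ∩ S).card ≤ c) := by
  rintro B B' ⟨hBE, hBr, hBS⟩ ⟨hB'E, hB'r, hB'S⟩ e he
  rw [Finset.mem_sdiff] at he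
  obtain ⟨heB, heB'⟩ := he
  have hE : e ∈ B \ B' := Finset.mem_sdiff.mpr ⟨heB, heB'⟩
  have hcc : (B \ B').card = (B' \ B).card := Finset.card_sdiff_comm (hBr.trans hB'r.symm)
  have hne : (B' \ B).Nonempty := Finset.card_pos.mp (by
    have : 1 ≤ (B \ B').card := Finset.card_pos.mpr ⟨e, hE⟩; omega)
  have hbase : ∀ f ∈ B' \ B, insert f (B.erase e) ⊆ E ∧ (insert f (B.erase e)).card = r := by
    intro f hf
    rw [Finset.mem_sdiff] at hf
    constructor
    · exact Finset.insert_subset (hB'E hf.1) ((Finset.erase_subset e B).trans hBE)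
    · rw [Finset.card_insert_of_notMem (fun h => hf.2 (Finset.mem_of_mem_erase h)),
        Finset.card_erase_of_mem heB]
      have : 1 ≤ B.card := Finset.card_pos.mpr ⟨e, heB⟩
      omega
  by_cases heS : e ∈ S
  · obtain ⟨f, hf⟩ := hne
    refine ⟨f, hf, (hbase f hf).1, (hbase f hf).2, ?_⟩
    have hsw := swap_inter_card B S heB (Finset.mem_sdiff.mp hf).2
    have : (if f ∈ S then 1 else 0) ≤ 1 := by split <;> omega
    simp only [heS, if_true] at hsw
    omega
  · by_cases hex : ∃ f ∈ B' \ B, f ∉ S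
    · obtain ⟨f, hf, hfS⟩ := hex
      refine ⟨f, hf, (hbase f hf).1, (hbase f hf).2, ?_⟩
      have hsw := swap_inter_card B S heB (Finset.mem_sdiff.mp hf).2
      simp only [heS, hfS, if_false] at hsw
      omega
    · push_neg at hex
      have hcnt := count_lemma B B' S (hBr.trans hB'r.symm) heB heB' heS hex
      obtain ⟨f, hf⟩ := hne
      refine ⟨f, hf, (hbase f hf).1, (hbase f hf).2, ?_⟩
      have hsw := swap_inter_card B S heB (Finset.mem_sdiff.mp hf).2
      simp only [heS, hex f hf, if_false, if_true] at hsw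
      omega

lemma exch_two (E S1 S2 : Finset ℕ) (r c1 c2 : ℕ)
    (hpart : ∀ x ∈ E, (x ∈ S1 ↔ x ∉ S2)) :
    ∀ B B' : Finset ℕ,
      (B ⊆ E ∧ B.card = r ∧ (B ∩ S1).card ≤ c1 ∧ (B ∩ S2).card ≤ c2) →
      (B' ⊆ E ∧ B'.card = r ∧ (B' ∩ S1).card ≤ c1 ∧ (B' ∩ S2).card ≤ c2) →
      ∀ e ∈ B \ B', ∃ f ∈ B' \ B,
        (insert f (B.erase e) ⊆ E ∧ (insert f (B.erase e)).card = r ∧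
          ((insert f (B.erase e)) ∩ S1).card ≤ c1 ∧
          ((insert f (B.erase e)) ∩ S2).card ≤ c2) := by
  rintro B B' ⟨hBE, hBr, hBS1, hBS2⟩ ⟨hB'E, hB'r, hB'S1, hB'S2⟩ e he
  rw [Finset.mem_sdiff] at he
  obtain ⟨heB, heB'⟩ := he
  have hE : e ∈ B \ B' := Finset.mem_sdiff.mpr ⟨heB, heB'⟩
  have hcc : (B \ B').card = (B' \ B).card := Finset.card_sdiff_comm (hBr.trans hB'r.symm)
  have hne : (B' \ B).Nonempty := Finset.card_pos.mp (by
    have : 1 ≤ (B \ B').card := Finset.card_pos.mpr ⟨e, hE⟩; omega)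
  have hbase : ∀ f ∈ B' \ B, insert f (B.erase e) ⊆ E ∧ (insert f (B.erase e)).card = r := by
    intro f hf
    rw [Finset.mem_sdiff] at hf
    refine ⟨Finset.insert_subset (hB'E hf.1) ((Finset.erase_subset e B).trans hBE), ?_⟩
    rw [Finset.card_insert_of_notMem (fun h => hf.2 (Finset.mem_of_mem_erase h)),
      Finset.card_erase_of_mem heB]
    have : 1 ≤ B.card := Finset.card_pos.mpr ⟨e, heB⟩
    omega
  by_cases heS1 : e ∈ S1
  · -- e ∈ S1, e ∉ S2
    have heS2 : e ∉ S2 := (hpart e (hBE heB)).mp heS1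
    by_cases hex : ∃ f ∈ B' \ B, f ∈ S1
    · obtain ⟨f, hf, hfS1⟩ := hex
      have hfS2 : f ∉ S2 := (hpart f (hB'E (Finset.mem_sdiff.mp hf).1)).mp hfS1
      refine ⟨f, hf, (hbase f hf).1, (hbase f hf).2, ?_, ?_⟩
      · have hsw := swap_inter_card B S1 heB (Finset.mem_sdiff.mp hf).2
        simp only [heS1, hfS1, if_true] at hsw; omega
      · have hsw := swap_inter_card B S2 heB (Finset.mem_sdiff.mp hf).2
        simp only [heS2, hfS2, if_false] at hsw; omega
    · push_neg at hex
      have hall : ∀ f ∈ B' \ B, f ∈ S2 := by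
        intro f hf
        by_contra hc
        exact hex f hf ((hpart f (hB'E (Finset.mem_sdiff.mp hf).1)).mpr hc)
      have hcnt := count_lemma B B' S2 (hBr.trans hB'r.symm) heB heB' heS2 hall
      obtain ⟨f, hf⟩ := hne
      have hfS2 : f ∈ S2 := hall f hf
      have hfS1 : f ∉ S1 := fun h => (hpart f (hB'E (Finset.mem_sdiff.mp hf).1)).mp h hfS2
      refine ⟨f, hf, (hbase f hf).1, (hbase f hf).2, ?_, ?_⟩
      · have hsw := swap_inter_card B S1 heB (Finset.mem_sdiff.mp hf).2
        simp only [heS1, hfS1, if_true, if_false] at hsw; omega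
      · have hsw := swap_inter_card B S2 heB (Finset.mem_sdiff.mp hf).2
        simp only [heS2, hfS2, if_true, if_false] at hsw; omega
  · -- e ∉ S1, so e ∈ S2
    have heS2 : e ∈ S2 := by
      by_contra hc; exact heS1 ((hpart e (hBE heB)).mpr hc)
    by_cases hex : ∃ f ∈ B' \ B, f ∈ S2
    · obtain ⟨f, hf, hfS2⟩ := hex
      have hfS1 : f ∉ S1 := fun h => (hpart f (hB'E (Finset.mem_sdiff.mp hf).1)).mp h hfS2
      refine ⟨f, hf, (hbase f hf).1, (hbase f hf).2, ?_, ?_⟩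
      · have hsw := swap_inter_card B S1 heB (Finset.mem_sdiff.mp hf).2
        simp only [heS1, hfS1, if_false] at hsw; omega
      · have hsw := swap_inter_card B S2 heB (Finset.mem_sdiff.mp hf).2
        simp only [heS2, hfS2, if_true] at hsw; omega
    · push_neg at hex
      have hall : ∀ f ∈ B' \ B, f ∈ S1 := by
        intro f hf
        by_contra hc
        exact hex f hf (by
          by_contra hc2
          exact hc ((hpart f (hB'E (Finset.mem_sdiff.mp hf).1)).mpr hc2))
      have hcnt := count_lemma B B' S1 (hBr.trans hB'r.symm) heB heB' heS1 hall
      obtain ⟨f, hf⟩ := hne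
      have hfS1 : f ∈ S1 := hall f hf
      have hfS2 : f ∉ S2 := (hpart f (hB'E (Finset.mem_sdiff.mp hf).1)).mp hfS1
      refine ⟨f, hf, (hbase f hf).1, (hbase f hf).2, ?_, ?_⟩
      · have hsw := swap_inter_card B S1 heB (Finset.mem_sdiff.mp hf).2
        simp only [heS1, hfS1, if_true, if_false] at hsw; omega
      · have hsw := swap_inter_card B S2 heB (Finset.mem_sdiff.mp hf).2
        simp only [heS2, hfS2, if_true, if_false] at hsw; omega

lemma build (n k t1 t2 : ℕ) (_hkn : k ≤ n) (h1 : t1 ≤ k) (h2 : t2 ≤ n - k) :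
    ∃ B : Finset ℕ, B ⊆ Finset.Icc 1 n ∧ B.card = t1 + t2 ∧
      (B ∩ Finset.Icc 1 k).card = t1 ∧ (B ∩ Finset.Icc (k + 1) n).card = t2 := by
  obtain ⟨T1, hT1s, hT1c⟩ := Finset.exists_subset_card_eq (by
    rw [Nat.card_Icc]; omega : t1 ≤ (Finset.Icc 1 k).card)
  obtain ⟨T2, hT2s, hT2c⟩ := Finset.exists_subset_card_eq (by
    rw [Nat.card_Icc]; omega : t2 ≤ (Finset.Icc (k + 1) n).card)
  have hdisj : Disjoint T1 T2 := by
    rw [Finset.disjoint_left]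
    intro a ha hb
    have h1 := Finset.mem_Icc.mp (hT1s ha)
    have h2 := Finset.mem_Icc.mp (hT2s hb)
    omega
  refine ⟨T1 ∪ T2, ?_, ?_, ?_, ?_⟩
  · intro x hx
    rcases Finset.mem_union.mp hx with h | h
    · have := Finset.mem_Icc.mp (hT1s h); exact Finset.mem_Icc.mpr ⟨this.1, this.2.trans _hkn⟩
    · have := Finset.mem_Icc.mp (hT2s h); exact Finset.mem_Icc.mpr ⟨by omega, this.2⟩
  · rw [Finset.card_union_of_disjoint hdisj, hT1c, hT2c]
  · have : (T1 ∪ T2) ∩ Finset.Icc 1 k = T1 := by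
      ext x
      simp only [Finset.mem_inter, Finset.mem_union, Finset.mem_Icc]
      constructor
      · rintro ⟨h | h, hx⟩
        · exact h
        · have := Finset.mem_Icc.mp (hT2s h); omega
      · intro h; have := Finset.mem_Icc.mp (hT1s h); exact ⟨Or.inl h, this⟩
    rw [this, hT1c]
  · have : (T1 ∪ T2) ∩ Finset.Icc (k + 1) n = T2 := by
      ext x
      simp only [Finset.mem_inter, Finset.mem_union, Finset.mem_Icc]
      constructor
      · rintro ⟨h | h, hx⟩
        · have := Finset.mem_Icc.mp (hT1s h); omega
        · exact h
      · intro h; have := Finset.mem_Icc.mp (hT2s h); exact ⟨Or.inr h, this⟩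
    rw [this, hT2c]

lemma part_card (n k : ℕ) (_hkn : k ≤ n) (B : Finset ℕ) (hB : B ⊆ Finset.Icc 1 n) :
    (B ∩ Finset.Icc 1 k).card + (B ∩ Finset.Icc (k + 1) n).card = B.card := by
  have hu : (B ∩ Finset.Icc 1 k) ∪ (B ∩ Finset.Icc (k + 1) n) = B := by
    ext x
    simp only [Finset.mem_union, Finset.mem_inter, Finset.mem_Icc]
    constructor
    · tauto
    · intro hx
      have := Finset.mem_Icc.mp (hB hx)
      rcases le_or_gt x k with h | h
      · exact Or.inl ⟨hx, this.1, h⟩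
      · exact Or.inr ⟨hx, h, this.2⟩
  have hd : Disjoint (B ∩ Finset.Icc 1 k) (B ∩ Finset.Icc (k + 1) n) := by
    rw [Finset.disjoint_left]
    intro a ha hb
    have h1 := Finset.mem_Icc.mp (Finset.mem_inter.mp ha).2
    have h2 := Finset.mem_Icc.mp (Finset.mem_inter.mp hb).2
    omega
  rw [← Finset.card_union_of_disjoint hd, hu]


theorem stmt_17 (n r k : ℕ) (hr : 2 ≤ r) (hn : r + 2 ≤ n) (hk : 2 ≤ k) (hk2 : k ≤ n / 2) :
    ∃ a1 a2 : ℕ, 0 < a1 ∧ a1 < min k r ∧ 0 < a2 ∧ a2 < min (n - k) r ∧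
      min k r + min (n - k) r = r + a1 + a2 ∧
      -- B1 is the base family of a matroid
      FinsetExchange (fun B => B ⊆ Finset.Icc 1 n ∧ B.card = r ∧
        (B ∩ Finset.Icc 1 k).card ≤ min k r - a1) ∧
      -- B2 is the base family of a matroid
      FinsetExchange (fun B => B ⊆ Finset.Icc 1 n ∧ B.card = r ∧
        (B ∩ Finset.Icc (k + 1) n).card ≤ min (n - k) r - a2) ∧
      -- B1 ∪ B2 is the set of all r-subsets of {1, ..., n}
      (∀ B : Finset ℕ, (B ⊆ Finset.Icc 1 n ∧ B.card = r) ↔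
        ((B ⊆ Finset.Icc 1 n ∧ B.card = r ∧
            (B ∩ Finset.Icc 1 k).card ≤ min k r - a1) ∨
          (B ⊆ Finset.Icc 1 n ∧ B.card = r ∧
            (B ∩ Finset.Icc (k + 1) n).card ≤ min (n - k) r - a2))) ∧
      -- B1 is proper
      (∃ B : Finset ℕ, B ⊆ Finset.Icc 1 n ∧ B.card = r ∧
        ¬ (B ∩ Finset.Icc 1 k).card ≤ min k r - a1) ∧
      -- B2 is proper
      (∃ B : Finset ℕ, B ⊆ Finset.Icc 1 n ∧ B.card = r ∧
        ¬ (B ∩ Finset.Icc (k + 1) n).card ≤ min (n - k) r - a2) ∧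
      -- B1 ∩ B2 is nonempty
      (∃ B : Finset ℕ, B ⊆ Finset.Icc 1 n ∧ B.card = r ∧
        (B ∩ Finset.Icc 1 k).card ≤ min k r - a1 ∧
        (B ∩ Finset.Icc (k + 1) n).card ≤ min (n - k) r - a2) ∧
      -- B1 ∩ B2 is the base family of a matroid
      FinsetExchange (fun B => B ⊆ Finset.Icc 1 n ∧ B.card = r ∧
        (B ∩ Finset.Icc 1 k).card ≤ min k r - a1 ∧
        (B ∩ Finset.Icc (k + 1) n).card ≤ min (n - k) r - a2) := by
  have hkey : r + 2 ≤ min k r + min (n - k) r := by omega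
  refine ⟨1, min k r + min (n - k) r - r - 1, by omega, by omega, by omega, by omega,
    by omega, ?_, ?_, ?_, ?_, ?_, ?_, ?_⟩
  · exact exch_one (Finset.Icc 1 n) (Finset.Icc 1 k) r (min k r - 1)
  · exact exch_one (Finset.Icc 1 n) (Finset.Icc (k + 1) n) r
      (min (n - k) r - (min k r + min (n - k) r - r - 1))
  · intro B
    constructor
    · rintro ⟨hBE, hBr⟩
      have hpc := part_card n k (by omega) B hBE
      have h1 : (B ∩ Finset.Icc 1 k).card ≤ k := by
        have h := Finset.card_le_card (Finset.inter_subset_right (s₁ := B)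
          (s₂ := Finset.Icc 1 k))
        rwa [Nat.card_Icc, Nat.add_sub_cancel] at h
      by_cases hc : (B ∩ Finset.Icc 1 k).card ≤ min k r - 1
      · exact Or.inl ⟨hBE, hBr, hc⟩
      · exact Or.inr ⟨hBE, hBr, by omega⟩
    · rintro (⟨h1, h2, _⟩ | ⟨h1, h2, _⟩) <;> exact ⟨h1, h2⟩
  · obtain ⟨B, hBE, hBc, hB1, hB2⟩ := build n k (min k r) (r - min k r)
      (by omega) (by omega) (by omega)
    exact ⟨B, hBE, by omega, by omega⟩
  · obtain ⟨B, hBE, hBc, hB1, hB2⟩ := build n k (r - min (n - k) r) (min (n - k) r)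
      (by omega) (by omega) (by omega)
    exact ⟨B, hBE, by omega, by omega⟩
  · obtain ⟨B, hBE, hBc, hB1, hB2⟩ := build n k (min k r - 1)
      (min (n - k) r - (min k r + min (n - k) r - r - 1))
      (by omega) (by omega) (by omega)
    exact ⟨B, hBE, by omega, by omega, by omega⟩
  · exact exch_two (Finset.Icc 1 n) (Finset.Icc 1 k) (Finset.Icc (k + 1) n) r
      (min k r - 1) (min (n - k) r - (min k r + min (n - k) r - r - 1))
      (by intro x hx; simp only [Finset.mem_Icc] at *; omega)
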